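/- If f solves f''' + ((m+1)/2) f f'' - m (f')² = 0 on [α,β], then ½(f''(β))² - ½(f''(α))² - (m/3)(f'(β))³ + (m/3)(f'(α))³ = -((m+1)/2) ∫_α^β f(t) (f''(t))² dt. -/

import Mathlib

open Real Set Filter Topology MeasureTheory

theorem stmt8 (m α β : ℝ) (hab : α ≤ β) (f f' f'' f''' : ℝ → ℝ)
    (hf : ∀ t ∈ Set.Icc α β, HasDerivWithinAt f (f' t) (Set.Icc α β) t)
    (hf' : ∀ t ∈ Set.Icc α β, HasDerivWithinAt f' (f'' t) (Set.Icc α β) t)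
    (hf'' : ∀ t ∈ Set.Icc α β, HasDerivWithinAt f'' (f''' t) (Set.Icc α β) t)
    (hcont : ContinuousOn f''' (Set.Icc α β))
    (hode : ∀ t ∈ Set.Icc α β,
      f''' t + (m + 1) / 2 * f t * f'' t - m * (f' t) ^ 2 = 0) :
    1 / 2 * (f'' β) ^ 2 - 1 / 2 * (f'' α) ^ 2
      - m / 3 * (f' β) ^ 3 + m / 3 * (f' α) ^ 3
      = -((m + 1) / 2) * ∫ t in α..β, f t * (f'' t) ^ 2 := by
  set g : ℝ → ℝ := fun t => 1 / 2 * (f'' t) ^ 2 - m / 3 * (f' t) ^ 3 with hg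
  have hcf : ContinuousOn f (Set.Icc α β) := fun t ht =>
    (hf t ht).continuousWithinAt
  have hcf' : ContinuousOn f' (Set.Icc α β) := fun t ht =>
    (hf' t ht).continuousWithinAt
  have hcf'' : ContinuousOn f'' (Set.Icc α β) := fun t ht =>
    (hf'' t ht).continuousWithinAt
  have hgd : ∀ t ∈ Set.Icc α β,
      HasDerivWithinAt g (-((m + 1) / 2) * (f t * (f'' t) ^ 2)) (Set.Icc α β) t := by
    intro t ht
    have h2 : HasDerivWithinAt (fun s => (f'' s) ^ 2) (2 * f'' t * f''' t)
        (Set.Icc α β) t := by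
      have := (hf'' t ht).fun_pow 2
      simpa [mul_comm, mul_assoc, mul_left_comm] using this
    have h3 : HasDerivWithinAt (fun s => (f' s) ^ 3) (3 * (f' t) ^ 2 * f'' t)
        (Set.Icc α β) t := by
      have := (hf' t ht).fun_pow 3
      simpa [mul_comm, mul_assoc, mul_left_comm] using this
    have h1 := (h2.const_mul (1/2 : ℝ)).fun_sub (h3.const_mul (m/3 : ℝ))
    refine h1.congr_deriv (Eq.symm ?_)
    have h0 := hode t ht
    linear_combination (-(f'' t)) * h0
  have hgc : ContinuousOn g (Set.Icc α β) :=
    ((hcf''.pow 2).const_smul (1/2 : ℝ)).sub ((hcf'.pow 3).const_smul (m/3 : ℝ))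
  have hgd' : ∀ t ∈ Set.Ioo α β,
      HasDerivAt g (-((m + 1) / 2) * (f t * (f'' t) ^ 2)) t := by
    intro t ht
    exact (hgd t (Set.mem_Icc_of_Ioo ht)).hasDerivAt (Icc_mem_nhds ht.1 ht.2)
  have hint : IntervalIntegrable (fun t => -((m + 1) / 2) * (f t * (f'' t) ^ 2)) volume α β := by
    apply ContinuousOn.intervalIntegrable
    rw [Set.uIcc_of_le hab]
    exact ((hcf.mul (hcf''.pow 2)).const_smul (-((m + 1) / 2) : ℝ))
  have := intervalIntegral.integral_eq_sub_of_hasDeriv_right_of_le hab hgc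
    (fun t ht => (hgd' t ht).hasDerivWithinAt) hint
  rw [intervalIntegral.integral_const_mul] at this
  simp only [hg] at this
  linarith [this]
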